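/- Let A_1, ..., A_d be positive semidefinite n×n matrices and r ≥ 1. Then for every unitarily invariant norm, |||(Σ_{k=1}^d A_k)^r||| ≤ d^{r-1} |||Σ_{k=1}^d A_k^r|||. -/

import Mathlib

open scoped Matrix ComplexOrder

/-- Real power of a matrix via the continuous functional calculus (for Hermitian matrices). -/
noncomputable def mpow {m : Type*} [Fintype m] [DecidableEq m]
    (A : Matrix m m ℂ) (t : ℝ) : Matrix m m ℂ :=
  cfc (fun x : ℝ => x ^ t) A

/-- The operator (spectral) norm of a matrix. -/
noncomputable def opNorm {m : Type*} [Fintype m] [DecidableEq m] (A : Matrix m m ℂ) : ℝ :=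
  ‖Matrix.toEuclideanCLM (𝕜 := ℂ) A‖

/-- The Schatten `p`-norm of a matrix: `(tr |A|^p)^{1/p}`. -/
noncomputable def schattenNorm {m : Type*} [Fintype m] [DecidableEq m]
    (p : ℝ) (A : Matrix m m ℂ) : ℝ :=
  ((mpow (Aᴴ * A) (p / 2)).trace.re) ^ (1 / p)

/-- The spherical Schatten `p`-norm of a tuple: `(tr (∑ S_i* S_i)^{p/2})^{1/p}`. -/
noncomputable def sphSchattenNorm {m : Type*} [Fintype m] [DecidableEq m] {d : ℕ}
    (p : ℝ) (T : Fin d → Matrix m m ℂ) : ℝ :=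
  ((mpow (∑ i, (T i)ᴴ * T i) (p / 2)).trace.re) ^ (1 / p)


namespace UIhelper

open Matrix Finset

variable {n : ℕ}

/-- quadratic form -/
noncomputable def qf (M : Matrix (Fin n) (Fin n) ℂ) (x : Fin n → ℂ) : ℝ :=
  (star x ⬝ᵥ M *ᵥ x).re

lemma qf_conj (U : Matrix (Fin n) (Fin n) ℂ) (e : Fin n → ℝ) (x : Fin n → ℂ) :
    qf (U * Matrix.diagonal (fun i => (e i : ℂ)) * Uᴴ) x
      = ∑ i, e i * Complex.normSq ((Uᴴ *ᵥ x) i) := by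
  set y := Uᴴ *ᵥ x with hy
  have h1 : (U * Matrix.diagonal (fun i => (e i : ℂ)) * Uᴴ) *ᵥ x
      = U *ᵥ (Matrix.diagonal (fun i => (e i : ℂ)) *ᵥ y) := by
    rw [hy, mulVec_mulVec, mulVec_mulVec]
  have h2 : star x ᵥ* U = star y := by
    rw [hy, star_mulVec, conjTranspose_conjTranspose]
  rw [qf, h1, dotProduct_mulVec, h2]
  have h3 : star y ⬝ᵥ (Matrix.diagonal (fun i => (e i : ℂ)) *ᵥ y)
      = ∑ i, (starRingEnd ℂ) (y i) * ((e i : ℂ) * y i) := by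
    simp [dotProduct, mulVec_diagonal]
  rw [h3, Complex.re_sum]
  refine Finset.sum_congr rfl fun i _ => ?_
  have : (starRingEnd ℂ) (y i) * ((e i : ℂ) * y i)
      = (e i : ℂ) * ((starRingEnd ℂ) (y i) * y i) := by ring
  rw [this, Complex.conj_mul', ← Complex.ofReal_pow, ← Complex.ofReal_mul, Complex.ofReal_re, Complex.sq_norm]


lemma re_star_dot (v : Fin n → ℂ) : (star v ⬝ᵥ v).re = ∑ i, Complex.normSq (v i) := by
  rw [dotProduct, Complex.re_sum]
  refine Finset.sum_congr rfl fun i _ => ?_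
  rw [Pi.star_apply, Complex.star_def, mul_comm, Complex.mul_conj, Complex.ofReal_re]

lemma sum_normSq_conjTranspose_mulVec (U : Matrix.unitaryGroup (Fin n) ℂ) (x : Fin n → ℂ) :
    ∑ i, Complex.normSq (((U : Matrix (Fin n) (Fin n) ℂ)ᴴ *ᵥ x) i) = ∑ i, Complex.normSq (x i) := by
  rw [← re_star_dot, ← re_star_dot]
  set Um := (U : Matrix (Fin n) (Fin n) ℂ)
  have h2 : star (Umᴴ *ᵥ x) = star x ᵥ* Um := by
    rw [star_mulVec, conjTranspose_conjTranspose]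
  have hU : Um * Umᴴ = 1 := by
    simpa [Um, star_eq_conjTranspose] using (Matrix.mem_unitaryGroup_iff.mp U.2)
  rw [h2, dotProduct_mulVec, vecMul_vecMul, hU, vecMul_one]

lemma qf_sum {ι : Type*} (s : Finset ι) (M : ι → Matrix (Fin n) (Fin n) ℂ) (x : Fin n → ℂ) :
    qf (∑ k ∈ s, M k) x = ∑ k ∈ s, qf (M k) x := by
  classical
  induction s using Finset.induction with
  | empty => simp [qf]
  | insert _ _ h ih =>
    rw [Finset.sum_insert h, Finset.sum_insert h, ← ih, qf, qf, add_mulVec, dotProduct_add,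
      Complex.add_re, qf]


lemma eig_dom {S B : Matrix (Fin n) (Fin n) ℂ} (hS : S.IsHermitian) (hB : B.IsHermitian)
    (hBnn : ∀ i, 0 ≤ hB.eigenvalues i) (g : ℝ → ℝ) (hg : MonotoneOn g (Set.Ici 0))
    (H : ∀ x : Fin n → ℂ, ∑ i, Complex.normSq (x i) = 1 → qf S x ≤ g (qf B x)) (j : Fin n) :
    hS.eigenvalues (Tuple.sort hS.eigenvalues j) ≤
      g (hB.eigenvalues (Tuple.sort hB.eigenvalues j)) := by
  classical
  set σ := Tuple.sort hS.eigenvalues with hσ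
  set τ := Tuple.sort hB.eigenvalues with hτ
  set US := (hS.eigenvectorUnitary : Matrix (Fin n) (Fin n) ℂ) with hUS
  set UB := (hB.eigenvectorUnitary : Matrix (Fin n) (Fin n) ℂ) with hUB
  -- the linear map whose kernel contains a good test vector
  let Φ : (Fin n → ℂ) →ₗ[ℂ] ((Set.Iio j) → ℂ) × ((Set.Ioi j) → ℂ) :=
  { toFun := fun x => (fun p => (USᴴ *ᵥ x) (σ p.1), fun p => (UBᴴ *ᵥ x) (τ p.1))
    map_add' := by intro a b; ext p <;> simp [mulVec_add]
    map_smul' := by intro c a; ext p <;> simp [mulVec_smul] }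
  have hker : LinearMap.ker Φ ≠ ⊥ := by
    apply LinearMap.ker_ne_bot_of_finrank_lt
    have h1 : Module.finrank ℂ (Fin n → ℂ) = n := by simp
    have h2 : Module.finrank ℂ (((Set.Iio j) → ℂ) × ((Set.Ioi j) → ℂ))
        = (j : ℕ) + (n - 1 - (j : ℕ)) := by
      simp [Module.finrank_prod, Fin.card_Iio, Fin.card_Ioi]
    rw [h1, h2]
    omega
  obtain ⟨x, hxker, hxne⟩ := Submodule.ne_bot_iff _ |>.mp hker
  -- normalize x
  have hpos : 0 < ∑ i, Complex.normSq (x i) := by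
    obtain ⟨i, hi⟩ := Function.ne_iff.mp hxne
    exact Finset.sum_pos' (fun i _ => Complex.normSq_nonneg _)
      ⟨i, Finset.mem_univ i, Complex.normSq_pos.mpr hi⟩
  set c : ℝ := Real.sqrt (∑ i, Complex.normSq (x i)) with hc
  have hcpos : 0 < c := Real.sqrt_pos.mpr hpos
  set u : Fin n → ℂ := ((c⁻¹ : ℝ) : ℂ) • x with hu
  have hnorm : ∀ (M : Matrix (Fin n) (Fin n) ℂ) (i : Fin n),
      Complex.normSq ((Mᴴ *ᵥ u) i) = (c⁻¹)^2 * Complex.normSq ((Mᴴ *ᵥ x) i) := by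
    intro M i
    rw [hu, mulVec_smul]
    simp [Complex.normSq_mul, sq, mul_inv]
  have hunit : ∑ i, Complex.normSq (u i) = 1 := by
    have : ∀ i, Complex.normSq (u i) = (c⁻¹)^2 * Complex.normSq (x i) := by
      intro i; rw [hu]; simp [Complex.normSq_mul, sq, mul_inv]
    rw [Finset.sum_congr rfl fun i _ => this i, ← Finset.mul_sum]
    rw [hc]
    rw [inv_pow, Real.sq_sqrt hpos.le, inv_mul_cancel₀ hpos.ne']
  -- vanishing coordinates
  have hΦ : Φ x = 0 := hxker
  have hS0 : ∀ i : Fin n, i < j → (USᴴ *ᵥ u) (σ i) = 0 := by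
    intro i hij
    have h1 : (USᴴ *ᵥ x) (σ i) = 0 := congrFun (congrArg Prod.fst hΦ) ⟨i, hij⟩
    rw [hu, mulVec_smul]
    simp [h1]
  have hB0 : ∀ i : Fin n, j < i → (UBᴴ *ᵥ u) (τ i) = 0 := by
    intro i hij
    have h1 : (UBᴴ *ᵥ x) (τ i) = 0 := congrFun (congrArg Prod.snd hΦ) ⟨i, hij⟩
    rw [hu, mulVec_smul]
    simp [h1]
  set p : Fin n → ℝ := fun i => Complex.normSq ((USᴴ *ᵥ u) i) with hp
  set q : Fin n → ℝ := fun i => Complex.normSq ((UBᴴ *ᵥ u) i) with hq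
  have hSrep : S = US * Matrix.diagonal (fun i => ((hS.eigenvalues i : ℝ) : ℂ)) * USᴴ := by
    conv_lhs => rw [hS.spectral_theorem]
    rfl
  have hBrep : B = UB * Matrix.diagonal (fun i => ((hB.eigenvalues i : ℝ) : ℂ)) * UBᴴ := by
    conv_lhs => rw [hB.spectral_theorem]
    rfl
  have hqS : qf S u = ∑ i, hS.eigenvalues i * p i :=
    (congrArg (fun M => qf M u) hSrep).trans (qf_conj US hS.eigenvalues u)
  have hqB : qf B u = ∑ i, hB.eigenvalues i * q i :=
    (congrArg (fun M => qf M u) hBrep).trans (qf_conj UB hB.eigenvalues u)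
  have hsump : ∑ i, p i = 1 := by
    rw [hp]; rw [sum_normSq_conjTranspose_mulVec hS.eigenvectorUnitary u]; exact hunit
  have hsumq : ∑ i, q i = 1 := by
    rw [hq]; rw [sum_normSq_conjTranspose_mulVec hB.eigenvectorUnitary u]; exact hunit
  -- lower bound for qf S u
  have hlow : hS.eigenvalues (σ j) ≤ qf S u := by
    have h1 : ∑ i, hS.eigenvalues i * p i = ∑ i, hS.eigenvalues (σ i) * p (σ i) :=
      (Equiv.sum_comp σ (fun i => hS.eigenvalues i * p i)).symm
    have h2 : ∑ i, hS.eigenvalues (σ j) * p (σ i) ≤ ∑ i, hS.eigenvalues (σ i) * p (σ i) := by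
      apply Finset.sum_le_sum
      intro i _
      rcases lt_or_ge i j with hij | hij
      · simp [p, hS0 i hij]
      · exact mul_le_mul_of_nonneg_right (Tuple.monotone_sort hS.eigenvalues hij)
          (Complex.normSq_nonneg _)
    have h3 : ∑ i, hS.eigenvalues (σ j) * p (σ i) = hS.eigenvalues (σ j) := by
      rw [← Finset.mul_sum, Equiv.sum_comp σ p, hsump, mul_one]
    rw [hqS, h1]
    rw [← h3]; exact h2
  -- upper bound for qf B u
  have hupp : qf B u ≤ hB.eigenvalues (τ j) := by
    have h1 : ∑ i, hB.eigenvalues i * q i = ∑ i, hB.eigenvalues (τ i) * q (τ i) :=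
      (Equiv.sum_comp τ (fun i => hB.eigenvalues i * q i)).symm
    have h2 : ∑ i, hB.eigenvalues (τ i) * q (τ i) ≤ ∑ i, hB.eigenvalues (τ j) * q (τ i) := by
      apply Finset.sum_le_sum
      intro i _
      rcases lt_or_ge j i with hij | hij
      · simp [q, hB0 i hij]
      · exact mul_le_mul_of_nonneg_right (Tuple.monotone_sort hB.eigenvalues hij)
          (Complex.normSq_nonneg _)
    have h3 : ∑ i, hB.eigenvalues (τ j) * q (τ i) = hB.eigenvalues (τ j) := by
      rw [← Finset.mul_sum, Equiv.sum_comp τ q, hsumq, mul_one]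
    rw [hqB, h1]
    exact h2.trans h3.le
  have hqBnn : 0 ≤ qf B u := by
    rw [hqB]
    exact Finset.sum_nonneg fun i _ => mul_nonneg (hBnn i) (Complex.normSq_nonneg _)
  calc hS.eigenvalues (σ j) ≤ qf S u := hlow
    _ ≤ g (qf B u) := H u hunit
    _ ≤ g (hB.eigenvalues (τ j)) := hg hqBnn (hBnn _) hupp


lemma mpow_rep {A : Matrix (Fin n) (Fin n) ℂ} (hA : A.PosSemidef) (r : ℝ) :
    mpow A r = (hA.1.eigenvectorUnitary : Matrix (Fin n) (Fin n) ℂ)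
      * Matrix.diagonal (fun i => ((hA.1.eigenvalues i ^ r : ℝ) : ℂ))
      * (hA.1.eigenvectorUnitary : Matrix (Fin n) (Fin n) ℂ)ᴴ := by
  rw [mpow, hA.1.cfc_eq]
  rfl

lemma qf_psd {A : Matrix (Fin n) (Fin n) ℂ} (hA : A.PosSemidef) (x : Fin n → ℂ) :
    qf A x = ∑ i, hA.1.eigenvalues i * Complex.normSq
      (((hA.1.eigenvectorUnitary : Matrix (Fin n) (Fin n) ℂ)ᴴ *ᵥ x) i) := by
  have hrep : A = (hA.1.eigenvectorUnitary : Matrix (Fin n) (Fin n) ℂ)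
      * Matrix.diagonal (fun i => ((hA.1.eigenvalues i : ℝ) : ℂ))
      * (hA.1.eigenvectorUnitary : Matrix (Fin n) (Fin n) ℂ)ᴴ := by
    conv_lhs => rw [hA.1.spectral_theorem]
    rfl
  exact (congrArg (fun M => qf M x) hrep).trans (qf_conj _ _ x)

lemma qf_mpow {A : Matrix (Fin n) (Fin n) ℂ} (hA : A.PosSemidef) (r : ℝ) (x : Fin n → ℂ) :
    qf (mpow A r) x = ∑ i, hA.1.eigenvalues i ^ r * Complex.normSq
      (((hA.1.eigenvectorUnitary : Matrix (Fin n) (Fin n) ℂ)ᴴ *ᵥ x) i) :=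
  (congrArg (fun M => qf M x) (mpow_rep hA r)).trans (qf_conj _ _ x)

lemma qf_mpow_nonneg {A : Matrix (Fin n) (Fin n) ℂ} (hA : A.PosSemidef) {r : ℝ} (hr : 0 ≤ r)
    (x : Fin n → ℂ) : 0 ≤ qf (mpow A r) x := by
  rw [qf_mpow hA r x]
  exact Finset.sum_nonneg fun i _ => mul_nonneg
    (Real.rpow_nonneg (hA.eigenvalues_nonneg i) r) (Complex.normSq_nonneg _)

/-- Per-vector Jensen inequality. -/
lemma qf_le_qf_mpow {A : Matrix (Fin n) (Fin n) ℂ} (hA : A.PosSemidef) {r : ℝ} (hr : 1 ≤ r)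
    {x : Fin n → ℂ} (hx : ∑ i, Complex.normSq (x i) = 1) :
    qf A x ≤ (qf (mpow A r) x) ^ r⁻¹ := by
  have hr0 : (0:ℝ) < r := lt_of_lt_of_le one_pos hr
  set U := hA.1.eigenvectorUnitary with hU
  set lam := hA.1.eigenvalues with hlam
  set p : Fin n → ℝ := fun i =>
    Complex.normSq (((U : Matrix (Fin n) (Fin n) ℂ)ᴴ *ᵥ x) i) with hp
  have hsump : ∑ i, p i = 1 := by
    rw [hp]; rw [sum_normSq_conjTranspose_mulVec U x]; exact hx
  have hqA : qf A x = ∑ i, p i * lam i := by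
    rw [qf_psd hA x]
    exact Finset.sum_congr rfl fun i _ => mul_comm _ _
  have hqM : qf (mpow A r) x = ∑ i, p i * lam i ^ r := by
    rw [qf_mpow hA r x]
    exact Finset.sum_congr rfl fun i _ => mul_comm _ _
  have key := Real.rpow_arith_mean_le_arith_mean_rpow Finset.univ p lam
    (fun i _ => Complex.normSq_nonneg _) hsump (fun i _ => hA.eigenvalues_nonneg i) hr
  have hqA0 : 0 ≤ qf A x := by
    rw [hqA]
    exact Finset.sum_nonneg fun i _ => mul_nonneg (Complex.normSq_nonneg _)
      (hA.eigenvalues_nonneg i)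
  calc qf A x = ((qf A x) ^ r) ^ r⁻¹ := (Real.rpow_rpow_inv hqA0 hr0.ne').symm
    _ ≤ (qf (mpow A r) x) ^ r⁻¹ := by
        apply Real.rpow_le_rpow (Real.rpow_nonneg hqA0 r) _ (inv_nonneg.mpr hr0.le)
        rw [hqA, hqM]
        exact key

/-- Scalar power-mean inequality. -/
lemma sum_le_rpow_mean {d : ℕ} (t : Fin d → ℝ) (ht : ∀ k, 0 ≤ t k) {r : ℝ} (hr : 1 ≤ r) :
    ∑ k, t k ≤ (d : ℝ) ^ (1 - r⁻¹) * (∑ k, t k ^ r) ^ r⁻¹ := by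
  have hr0 : (0:ℝ) < r := lt_of_lt_of_le one_pos hr
  rcases Nat.eq_zero_or_pos d with hd | hd
  · subst hd
    simp [Real.zero_rpow (inv_ne_zero hr0.ne')]
  have hdpos : (0:ℝ) < d := by exact_mod_cast hd
  have key := Real.rpow_arith_mean_le_arith_mean_rpow Finset.univ
    (fun _ : Fin d => (d : ℝ)⁻¹) t (fun i _ => by positivity)
    (by simp [Finset.card_univ, mul_comm, mul_inv_cancel₀ hdpos.ne']) (fun i _ => ht i) hr
  have h1 : (∑ k, (d:ℝ)⁻¹ * t k) = (d:ℝ)⁻¹ * ∑ k, t k := by rw [Finset.mul_sum]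
  have h2 : (∑ k, (d:ℝ)⁻¹ * t k ^ r) = (d:ℝ)⁻¹ * ∑ k, t k ^ r := by rw [Finset.mul_sum]
  rw [h1, h2] at key
  have hsum0 : 0 ≤ ∑ k, t k := Finset.sum_nonneg fun i _ => ht i
  have hstep : (d:ℝ)⁻¹ * ∑ k, t k ≤ ((d:ℝ)⁻¹ * ∑ k, t k ^ r) ^ r⁻¹ := by
    calc (d:ℝ)⁻¹ * ∑ k, t k = (((d:ℝ)⁻¹ * ∑ k, t k) ^ r) ^ r⁻¹ :=
          (Real.rpow_rpow_inv (by positivity) hr0.ne').symm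
      _ ≤ ((d:ℝ)⁻¹ * ∑ k, t k ^ r) ^ r⁻¹ :=
          Real.rpow_le_rpow (Real.rpow_nonneg (by positivity) r) key (inv_nonneg.mpr hr0.le)
  have hmul := mul_le_mul_of_nonneg_left hstep hdpos.le
  rw [← mul_assoc, mul_inv_cancel₀ hdpos.ne', one_mul] at hmul
  refine hmul.trans (le_of_eq ?_)
  rw [Real.mul_rpow (by positivity) (Finset.sum_nonneg fun i _ => Real.rpow_nonneg (ht i) r),
    ← mul_assoc]
  congr 1
  rw [Real.inv_rpow hdpos.le, ← Real.rpow_neg hdpos.le,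
    show (1:ℝ) - r⁻¹ = 1 + -r⁻¹ by ring, Real.rpow_add hdpos, Real.rpow_one]


section Norm

variable (N : Matrix (Fin n) (Fin n) ℂ → ℝ)

lemma perm_star (σ : Equiv.Perm (Fin n)) :
    star (σ.toPEquiv.toMatrix : Matrix (Fin n) (Fin n) ℂ) = σ.symm.toPEquiv.toMatrix := by
  ext i j
  simp only [star_eq_conjTranspose, conjTranspose_apply, PEquiv.toMatrix_apply,
    Equiv.toPEquiv_apply, Option.mem_def, Option.some.injEq]
  by_cases h : σ j = i
  · subst h
    simp
  · have h2 : ¬ (σ.symm i = j) := fun hc => h (by rw [← hc, Equiv.apply_symm_apply])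
    simp [h, h2]

lemma perm_mem_unitary (σ : Equiv.Perm (Fin n)) :
    (σ.toPEquiv.toMatrix : Matrix (Fin n) (Fin n) ℂ) ∈ Matrix.unitaryGroup (Fin n) ℂ := by
  rw [Matrix.mem_unitaryGroup_iff, perm_star, ← PEquiv.toMatrix_trans, ← Equiv.toPEquiv_trans]
  simp [PEquiv.toMatrix_refl]

lemma N_diag_perm (Nui : ∀ (U W : Matrix.unitaryGroup (Fin n) ℂ) X,
      N ((U : Matrix (Fin n) (Fin n) ℂ) * X * (W : Matrix (Fin n) (Fin n) ℂ)) = N X)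
    (σ : Equiv.Perm (Fin n)) (v : Fin n → ℝ) :
    N (Matrix.diagonal fun i => (v (σ i) : ℂ)) = N (Matrix.diagonal fun i => (v i : ℂ)) := by
  have key : (σ.toPEquiv.toMatrix : Matrix (Fin n) (Fin n) ℂ)
      * Matrix.diagonal (fun i => (v i : ℂ)) * σ.symm.toPEquiv.toMatrix
      = Matrix.diagonal fun i => (v (σ i) : ℂ) := by
    rw [PEquiv.toMatrix_toPEquiv_mul, PEquiv.mul_toMatrix_toPEquiv]
    ext i j
    simp only [submatrix_apply, Equiv.symm_symm, id_eq, Matrix.diagonal_apply]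
    by_cases h : i = j
    · simp [h]
    · simp [h, fun hc => h (σ.injective hc)]
  have hmem := perm_mem_unitary (n := n) σ
  have hmem' : (σ.symm.toPEquiv.toMatrix : Matrix (Fin n) (Fin n) ℂ)
      ∈ Matrix.unitaryGroup (Fin n) ℂ := perm_mem_unitary σ.symm
  calc N (Matrix.diagonal fun i => (v (σ i) : ℂ))
      = N ((⟨_, hmem⟩ : Matrix.unitaryGroup (Fin n) ℂ)
          * Matrix.diagonal (fun i => (v i : ℂ)) * (⟨_, hmem'⟩ : Matrix.unitaryGroup (Fin n) ℂ)) := by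
        rw [show ((⟨_, hmem⟩ : Matrix.unitaryGroup (Fin n) ℂ) : Matrix (Fin n) (Fin n) ℂ)
          * Matrix.diagonal (fun i => (v i : ℂ))
          * ((⟨_, hmem'⟩ : Matrix.unitaryGroup (Fin n) ℂ) : Matrix (Fin n) (Fin n) ℂ) = _ from key]
    _ = N (Matrix.diagonal fun i => (v i : ℂ)) := Nui _ _ _

lemma N_diag_mono
    (Nadd : ∀ X Y, N (X + Y) ≤ N X + N Y)
    (Nsmul : ∀ (c : ℂ) X, N (c • X) = ‖c‖ * N X)
    (Nui : ∀ (U W : Matrix.unitaryGroup (Fin n) ℂ) X,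
      N ((U : Matrix (Fin n) (Fin n) ℂ) * X * (W : Matrix (Fin n) (Fin n) ℂ)) = N X)
    (v w : Fin n → ℝ) (h0 : ∀ i, 0 ≤ v i) (hvw : ∀ i, v i ≤ w i) :
    N (Matrix.diagonal fun i => (v i : ℂ)) ≤ N (Matrix.diagonal fun i => (w i : ℂ)) := by
  classical
  set k : Fin n → ℝ := fun i => if w i = 0 then 0 else Real.sqrt (v i / w i) with hk
  have hk01 : ∀ i, 0 ≤ k i ∧ k i ≤ 1 := by
    intro i
    rw [hk]
    by_cases h : w i = 0
    · simp [h]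
    · have hw : 0 < w i := lt_of_le_of_ne (le_trans (h0 i) (hvw i)) (Ne.symm h)
      constructor
      · simp [h, Real.sqrt_nonneg]
      · simp only [h, if_false]
        exact Real.sqrt_le_one.mpr (by rw [div_le_one hw]; exact hvw i)
  have hkw : ∀ i, k i * w i * k i = v i := by
    intro i
    rw [hk]
    by_cases h : w i = 0
    · simp [h]
      exact (le_antisymm (h ▸ hvw i) (h0 i)).symm ▸ rfl
    · have hw : 0 < w i := lt_of_le_of_ne (le_trans (h0 i) (hvw i)) (Ne.symm h)
      simp only [h, if_false]
      rw [mul_comm (Real.sqrt _) (w i), mul_assoc, Real.mul_self_sqrt (div_nonneg (h0 i) (le_trans (h0 i) (hvw i)))]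
      field_simp
  set u : Fin n → ℂ := fun i => (k i : ℂ) + (Real.sqrt (1 - k i ^ 2) : ℂ) * Complex.I with hu
  have hnormu : ∀ i, u i * star (u i) = 1 := by
    intro i
    rw [hu]
    have h1 : (0:ℝ) ≤ 1 - k i ^ 2 := by nlinarith [(hk01 i).1, (hk01 i).2]
    simp only [star_add, star_mul', Complex.star_def, Complex.conj_ofReal, Complex.conj_I]
    ring_nf
    rw [Complex.I_sq]
    have h2 : ((Real.sqrt (1 - k i ^ 2) : ℂ))^2 = ((1 - k i ^ 2 : ℝ) : ℂ) := by
      rw [← Complex.ofReal_pow, Real.sq_sqrt h1]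
    push_cast at h2 ⊢
    rw [h2]
    ring
  set K : Matrix (Fin n) (Fin n) ℂ := Matrix.diagonal (fun i => (k i : ℂ)) with hKdef
  set E : Matrix (Fin n) (Fin n) ℂ := Matrix.diagonal (fun i => (w i : ℂ)) with hEdef
  set U : Matrix (Fin n) (Fin n) ℂ := Matrix.diagonal u with hUdef
  have hstarU : star U = Matrix.diagonal (fun i => star (u i)) := by
    rw [hUdef, star_eq_conjTranspose, diagonal_conjTranspose]
    rfl
  have hUmem : U ∈ Matrix.unitaryGroup (Fin n) ℂ := by
    rw [Matrix.mem_unitaryGroup_iff, hstarU, hUdef, diagonal_mul_diagonal]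
    rw [show (fun i => u i * star (u i)) = fun _ => (1:ℂ) from funext fun i => hnormu i,
      diagonal_one]
  have hK2 : K = (2⁻¹ : ℂ) • (U + star U) := by
    rw [hstarU, hUdef, hKdef, diagonal_add, ← diagonal_smul]
    refine congrArg Matrix.diagonal (funext fun i => ?_)
    rw [hu]
    simp only [Pi.smul_apply, star_add, star_mul', Complex.star_def, Complex.conj_ofReal,
      Complex.conj_I, smul_eq_mul]
    ring
  have hKEK : Matrix.diagonal (fun i => (v i : ℂ)) = K * E * K := by
    rw [hKdef, hEdef, diagonal_mul_diagonal, diagonal_mul_diagonal]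
    refine congrArg Matrix.diagonal (funext fun i => ?_)
    rw [← hkw i]
    push_cast
    ring
  set V : Matrix (Fin n) (Fin n) ℂ := star U with hVdef
  have hexp : K * E * K = (2⁻¹ * 2⁻¹ : ℂ) • (U * E * U + U * E * V + (V * E * U + V * E * V)) := by
    rw [hK2]
    rw [smul_mul_assoc, smul_mul_assoc, mul_smul_comm, smul_smul]
    congr 1
    noncomm_ring
  have hUe : (U : Matrix (Fin n) (Fin n) ℂ) ∈ Matrix.unitaryGroup (Fin n) ℂ := hUmem
  have hVe : (V : Matrix (Fin n) (Fin n) ℂ) ∈ Matrix.unitaryGroup (Fin n) ℂ := by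
    rw [hVdef]; exact Unitary.star_mem hUmem
  have hNU : ∀ (X Y : Matrix (Fin n) (Fin n) ℂ)
      (hX : X ∈ Matrix.unitaryGroup (Fin n) ℂ) (hY : Y ∈ Matrix.unitaryGroup (Fin n) ℂ),
      N (X * E * Y) = N E := fun X Y hX hY => Nui ⟨X, hX⟩ ⟨Y, hY⟩ E
  calc N (Matrix.diagonal fun i => (v i : ℂ))
      = N ((2⁻¹ * 2⁻¹ : ℂ) • (U * E * U + U * E * V + (V * E * U + V * E * V))) := by
        rw [hKEK, hexp]
    _ = 4⁻¹ * N (U * E * U + U * E * V + (V * E * U + V * E * V)) := by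
        rw [Nsmul]
        norm_num
    _ ≤ 4⁻¹ * (N (U * E * U) + N (U * E * V) + (N (V * E * U) + N (V * E * V))) := by
        have h1 := Nadd (U * E * U + U * E * V) (V * E * U + V * E * V)
        have h2 := Nadd (U * E * U) (U * E * V)
        have h3 := Nadd (V * E * U) (V * E * V)
        have : N (U * E * U + U * E * V + (V * E * U + V * E * V))
            ≤ N (U * E * U) + N (U * E * V) + (N (V * E * U) + N (V * E * V)) := by
          calc N (U * E * U + U * E * V + (V * E * U + V * E * V))
              ≤ N (U * E * U + U * E * V) + N (V * E * U + V * E * V) := h1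
            _ ≤ N (U * E * U) + N (U * E * V) + (N (V * E * U) + N (V * E * V)) :=
              add_le_add h2 h3
        linarith
    _ = N E := by
        rw [hNU U U hUe hUe, hNU U V hUe hVe, hNU V U hVe hUe, hNU V V hVe hVe]
        ring

end Norm

end UIhelper

open UIhelper

/-- For positive semidefinite `A_1, …, A_d` and `r ≥ 1`, every unitarily invariant norm
satisfies `|||(∑ A_k)^r||| ≤ d^(r-1) |||∑ A_k^r|||`. -/
theorem unitarilyInvariant_rpow_sum_le_of_one_le {n d : ℕ}
    (A : Fin d → Matrix (Fin n) (Fin n) ℂ) (hA : ∀ k, (A k).PosSemidef)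
    (r : ℝ) (hr : 1 ≤ r)
    (N : Matrix (Fin n) (Fin n) ℂ → ℝ)
    (Nadd : ∀ X Y, N (X + Y) ≤ N X + N Y)
    (Nsmul : ∀ (c : ℂ) X, N (c • X) = ‖c‖ * N X)
    (Ndef : ∀ X, N X = 0 → X = 0)
    (Nui : ∀ (U W : Matrix.unitaryGroup (Fin n) ℂ) X,
      N ((U : Matrix (Fin n) (Fin n) ℂ) * X * (W : Matrix (Fin n) (Fin n) ℂ)) = N X) :
    N (mpow (∑ k, A k) r) ≤ (d : ℝ) ^ (r - 1) * N (∑ k, mpow (A k) r) := by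
  classical
  have hr0 : (0:ℝ) < r := lt_of_lt_of_le one_pos hr
  set S := ∑ k, A k with hSdef
  set B := ∑ k, mpow (A k) r with hBdef
  have hSpsd : S.PosSemidef := by
    rw [hSdef]
    exact Finset.sum_induction A _ (fun a b ha hb => ha.add hb) Matrix.PosSemidef.zero
      (fun k _ => hA k)
  have hBpsd : B.PosSemidef := by
    rw [hBdef]
    refine Finset.sum_induction _ _ (fun a b ha hb => ha.add hb) Matrix.PosSemidef.zero
      fun k _ => ?_
    rw [mpow_rep (hA k) r]
    have hdiag : (Matrix.diagonal fun i => (((hA k).1.eigenvalues i ^ r : ℝ) : ℂ)).PosSemidef := by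
      rw [Matrix.posSemidef_diagonal_iff]
      intro i
      exact Complex.zero_le_real.mpr (Real.rpow_nonneg ((hA k).eigenvalues_nonneg i) r)
    exact hdiag.mul_mul_conjTranspose_same
      (((hA k).1.eigenvectorUnitary : Matrix (Fin n) (Fin n) ℂ))
  set σ := Tuple.sort hSpsd.1.eigenvalues with hσdef
  set τ := Tuple.sort hBpsd.1.eigenvalues with hτdef
  have hmono : MonotoneOn (fun t : ℝ => (d:ℝ)^(1 - r⁻¹) * t ^ r⁻¹) (Set.Ici 0) := by
    intro a ha b hb hab
    exact mul_le_mul_of_nonneg_left (Real.rpow_le_rpow ha hab (inv_nonneg.mpr hr0.le))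
      (Real.rpow_nonneg (Nat.cast_nonneg d) _)
  have hH : ∀ x : Fin n → ℂ, ∑ i, Complex.normSq (x i) = 1 →
      qf S x ≤ (d:ℝ)^(1 - r⁻¹) * (qf B x) ^ r⁻¹ := by
    intro x hx
    rw [hSdef, hBdef, qf_sum, qf_sum]
    calc ∑ k, qf (A k) x ≤ ∑ k, (qf (mpow (A k) r) x) ^ r⁻¹ :=
          Finset.sum_le_sum fun k _ => qf_le_qf_mpow (hA k) hr hx
      _ ≤ (d:ℝ)^(1 - r⁻¹) * (∑ k, ((qf (mpow (A k) r) x) ^ r⁻¹) ^ r) ^ r⁻¹ :=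
          sum_le_rpow_mean _ (fun k => Real.rpow_nonneg (qf_mpow_nonneg (hA k) hr0.le x) _) hr
      _ = (d:ℝ)^(1 - r⁻¹) * (∑ k, qf (mpow (A k) r) x) ^ r⁻¹ := by
          rw [Finset.sum_congr rfl
            (fun k _ => Real.rpow_inv_rpow (qf_mpow_nonneg (hA k) hr0.le x) hr0.ne')]
  have hdom : ∀ j, hSpsd.1.eigenvalues (σ j) ^ r
      ≤ (d:ℝ)^(r-1) * hBpsd.1.eigenvalues (τ j) := by
    intro j
    have h1 := eig_dom hSpsd.1 hBpsd.1 (fun i => hBpsd.eigenvalues_nonneg i)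
      (fun t : ℝ => (d:ℝ)^(1 - r⁻¹) * t ^ r⁻¹) hmono hH j
    have h2 := Real.rpow_le_rpow (hSpsd.eigenvalues_nonneg _) h1 hr0.le
    refine h2.trans (le_of_eq ?_)
    rw [Real.mul_rpow (Real.rpow_nonneg (Nat.cast_nonneg d) _)
        (Real.rpow_nonneg (hBpsd.eigenvalues_nonneg _) _),
      Real.rpow_inv_rpow (hBpsd.eigenvalues_nonneg _) hr0.ne',
      ← Real.rpow_mul (Nat.cast_nonneg d)]
    congr 2
    field_simp
  have hNmpowS : N (mpow S r)
      = N (Matrix.diagonal fun i => ((hSpsd.1.eigenvalues i ^ r : ℝ) : ℂ)) := by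
    rw [mpow_rep hSpsd r]
    exact Nui hSpsd.1.eigenvectorUnitary
      ⟨star (hSpsd.1.eigenvectorUnitary : Matrix (Fin n) (Fin n) ℂ),
        Unitary.star_mem hSpsd.1.eigenvectorUnitary.2⟩ _
  have hNB : N B = N (Matrix.diagonal fun i => ((hBpsd.1.eigenvalues i : ℝ) : ℂ)) := by
    have hrep : B = (hBpsd.1.eigenvectorUnitary : Matrix (Fin n) (Fin n) ℂ)
        * Matrix.diagonal (fun i => ((hBpsd.1.eigenvalues i : ℝ) : ℂ))
        * ((hBpsd.1.eigenvectorUnitary : Matrix (Fin n) (Fin n) ℂ))ᴴ := by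
      conv_lhs => rw [hBpsd.1.spectral_theorem]
      rfl
    rw [congrArg N hrep]
    exact Nui hBpsd.1.eigenvectorUnitary
      ⟨star (hBpsd.1.eigenvectorUnitary : Matrix (Fin n) (Fin n) ℂ),
        Unitary.star_mem hBpsd.1.eigenvectorUnitary.2⟩ _
  calc N (mpow S r)
      = N (Matrix.diagonal fun i => ((hSpsd.1.eigenvalues (σ i) ^ r : ℝ) : ℂ)) := by
        rw [hNmpowS, ← N_diag_perm N Nui σ (fun i => hSpsd.1.eigenvalues i ^ r)]
    _ ≤ N (Matrix.diagonal fun i => (((d:ℝ)^(r-1) * hBpsd.1.eigenvalues (τ i) : ℝ) : ℂ)) :=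
        N_diag_mono N Nadd Nsmul Nui _ _
          (fun i => Real.rpow_nonneg (hSpsd.eigenvalues_nonneg _) r) hdom
    _ = (d:ℝ)^(r-1) * N (Matrix.diagonal fun i => ((hBpsd.1.eigenvalues (τ i) : ℝ) : ℂ)) := by
        rw [show (fun i => (((d:ℝ)^(r-1) * hBpsd.1.eigenvalues (τ i) : ℝ) : ℂ))
            = (((d:ℝ)^(r-1) : ℝ) : ℂ) • fun i => ((hBpsd.1.eigenvalues (τ i) : ℝ) : ℂ) from
          funext fun i => by push_cast; simp [smul_eq_mul]]
        rw [Matrix.diagonal_smul, Nsmul]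
        congr 1
        rw [show ((((d:ℝ)^(r-1) : ℝ)) : ℂ) = RCLike.ofReal ((d:ℝ)^(r-1)) from rfl,
          RCLike.norm_ofReal, abs_of_nonneg (Real.rpow_nonneg (Nat.cast_nonneg d) _)]
    _ = (d:ℝ)^(r-1) * N B := by
        rw [N_diag_perm N Nui τ, ← hNB]
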